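/- Let F : ℝⁿ → ℝ be convex and differentiable with L-Lipschitz gradient, and additionally τ-strongly convex with 0 < τ ≤ L. Then the gradient descent map g(x) = x - (2/(L+τ))∇F(x) is Lipschitz continuous with constant κ = (L - τ)/(L + τ) < 1. -/

import Mathlib

open Set InnerProductSpace
open scoped RealInnerProductSpace

variable {E : Type*} [NormedAddCommGroup E] [InnerProductSpace ℝ E] [CompleteSpace E]

lemma aux_lineDeriv {f : E → ℝ} {f' : E → E} (hf : ∀ z, HasGradientAt f (f' z) z)
    (x u : E) (t : ℝ) :
    HasDerivAt (fun s : ℝ => f (x + s • u)) ⟪f' (x + t • u), u⟫ t := by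
  have h1 : HasDerivAt (fun s : ℝ => x + s • u) u t := by
    simpa using ((hasDerivAt_id t).smul_const u).const_add x
  have h2 := (hasGradientAt_iff_hasFDerivAt.mp (hf (x + t • u))).comp_hasDerivAt t h1
  simp only [toDual_apply_apply] at h2
  exact h2

/-- First-order condition for convex differentiable functions. -/
lemma aux_first_order {f : E → ℝ} {f' : E → E} (hc : ConvexOn ℝ univ f)
    (hf : ∀ z, HasGradientAt f (f' z) z) (x y : E) :
    f x + ⟪f' x, y - x⟫ ≤ f y := by
  set u := y - x with hu
  have hφc : ConvexOn ℝ univ (fun t : ℝ => f (x + t • u)) := by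
    have h := hc.comp_affineMap (AffineMap.lineMap x y : ℝ →ᵃ[ℝ] E)
    have he : (f ∘ (AffineMap.lineMap x y : ℝ →ᵃ[ℝ] E)) = fun t : ℝ => f (x + t • u) := by
      funext t
      simp only [Function.comp_apply, AffineMap.lineMap_apply, hu]
      congr 1
      rw [vsub_eq_sub, vadd_eq_add]
      abel
    rw [he] at h
    simpa using h
  have hd0 := aux_lineDeriv hf x u 0
  have hslope := hφc.le_slope_of_hasDerivAt (mem_univ (0:ℝ)) (mem_univ (1:ℝ)) one_pos
    (by simpa using hd0)
  rw [slope_def_field] at hslope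
  have h1 : x + (1:ℝ) • u = y := by rw [one_smul, hu]; abel
  have h0 : x + (0:ℝ) • u = x := by rw [zero_smul, add_zero]
  rw [h1, h0] at hslope
  simp only [div_one, sub_zero] at hslope
  linarith

/-- Descent lemma from a one-sided monotonicity bound on the gradient. -/
lemma aux_descent {f : E → ℝ} {f' : E → E} {M : ℝ}
    (hf : ∀ z, HasGradientAt f (f' z) z)
    (hub : ∀ a b, ⟪f' a - f' b, a - b⟫ ≤ M * ‖a - b‖ ^ 2) (x y : E) :
    f y ≤ f x + ⟪f' x, y - x⟫ + M / 2 * ‖y - x‖ ^ 2 := by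
  set u := y - x with hu
  set ψ : ℝ → ℝ := fun t => f (x + t • u) - t * ⟪f' x, u⟫ - M * t ^ 2 / 2 * ‖u‖ ^ 2 with hψ
  have hder : ∀ t : ℝ, HasDerivAt ψ (⟪f' (x + t • u) - f' x, u⟫ - M * t * ‖u‖ ^ 2) t := by
    intro t
    have h1 := aux_lineDeriv hf x u t
    have h2 : HasDerivAt (fun t : ℝ => t * ⟪f' x, u⟫) ⟪f' x, u⟫ t := by
      simpa using (hasDerivAt_id t).mul_const ⟪f' x, u⟫
    have h3 : HasDerivAt (fun t : ℝ => M * t ^ 2 / 2 * ‖u‖ ^ 2) (M * t * ‖u‖ ^ 2) t := by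
      have hp : HasDerivAt (fun t : ℝ => t ^ 2) (2 * t) t := by
        simpa using hasDerivAt_pow 2 t
      have := ((hp.const_mul M).div_const 2).mul_const (‖u‖ ^ 2)
      have he : M * (2 * t) / 2 * ‖u‖ ^ 2 = M * t * ‖u‖ ^ 2 := by ring
      rwa [he] at this
    have h4 := (h1.sub h2).sub h3
    have he2 : ⟪f' (x + t • u) - f' x, u⟫ - M * t * ‖u‖ ^ 2
        = ⟪f' (x + t • u), u⟫ - ⟪f' x, u⟫ - M * t * ‖u‖ ^ 2 := by
      rw [inner_sub_left]
    rw [he2]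
    exact h4
  have hderiv_nonpos : ∀ t ∈ interior (Icc (0:ℝ) 1), deriv ψ t ≤ 0 := by
    intro t ht
    rw [(hder t).deriv]
    rw [interior_Icc] at ht
    have ht0 : 0 < t := ht.1
    have h5 := hub (x + t • u) x
    have heq : (x + t • u) - x = t • u := by abel
    rw [heq, real_inner_smul_right, norm_smul] at h5
    have hx2 : M * (‖t‖ * ‖u‖) ^ 2 = t * (M * t * ‖u‖ ^ 2) := by
      rw [Real.norm_eq_abs, mul_pow, sq_abs]; ring
    have h6 : t * ⟪f' (x + t • u) - f' x, u⟫ ≤ t * (M * t * ‖u‖ ^ 2) := by linarith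
    have := le_of_mul_le_mul_left h6 ht0
    linarith
  have hcont : ContinuousOn ψ (Icc 0 1) :=
    fun t _ => ((hder t).continuousAt).continuousWithinAt
  have hdiff : DifferentiableOn ℝ ψ (interior (Icc (0:ℝ) 1)) :=
    fun t _ => ((hder t).differentiableAt).differentiableWithinAt
  have h10 : ψ 1 ≤ ψ 0 :=
    antitoneOn_of_deriv_nonpos (convex_Icc 0 1) hcont hdiff hderiv_nonpos
      (by norm_num) (by norm_num) zero_le_one
  have h1 : x + (1:ℝ) • u = y := by rw [one_smul, hu]; abel
  have h0 : x + (0:ℝ) • u = x := by rw [zero_smul, add_zero]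
  simp only [hψ, h1, h0] at h10
  rw [hu]
  nlinarith [h10]

/-- Co-coercivity (Baillon–Haddad). -/
lemma aux_coco {f : E → ℝ} {f' : E → E} {M : ℝ} (hM : 0 < M)
    (hc : ConvexOn ℝ univ f) (hf : ∀ z, HasGradientAt f (f' z) z)
    (hub : ∀ a b, ⟪f' a - f' b, a - b⟫ ≤ M * ‖a - b‖ ^ 2) (x y : E) :
    ‖f' x - f' y‖ ^ 2 ≤ M * ⟪f' x - f' y, x - y⟫ := by
  have key : ∀ a b : E, 2 * M * (f a - ⟪f' a, a⟫) + ‖f' b - f' a‖ ^ 2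
      ≤ 2 * M * (f b - ⟪f' a, b⟫) := by
    intro a b
    set φ : E → ℝ := fun z => f z - ⟪f' a, z⟫ with hφ
    have hφgrad : ∀ z, HasGradientAt φ (f' z - f' a) z := by
      intro z
      rw [hasGradientAt_iff_hasFDerivAt, map_sub]
      exact (hasGradientAt_iff_hasFDerivAt.mp (hf z)).sub (toDual ℝ E (f' a)).hasFDerivAt
    have hφconv : ConvexOn ℝ univ φ := by
      have hl : ConvexOn ℝ univ (fun z : E => ⟪-(f' a), z⟫) :=
        LinearMap.convexOn ((toDual ℝ E (-(f' a))).toLinearMap) convex_univ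
      have h := hc.add hl
      have heq : φ = (f + fun z : E => ⟪-(f' a), z⟫) := by
        funext z
        simp [hφ, inner_neg_left, sub_eq_add_neg]
      rw [heq]
      simpa using h
    have hφub : ∀ c d : E, ⟪(f' c - f' a) - (f' d - f' a), c - d⟫ ≤ M * ‖c - d‖ ^ 2 := by
      intro c d
      have hcd : (f' c - f' a) - (f' d - f' a) = f' c - f' d := by abel
      rw [hcd]; exact hub c d
    have hmin : φ a ≤ φ (b - (1 / M) • (f' b - f' a)) := by
      have := aux_first_order hφconv hφgrad a (b - (1 / M) • (f' b - f' a))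
      simpa using this
    set z := b - (1 / M) • (f' b - f' a) with hz
    have hdesc := aux_descent hφgrad hφub b z
    have hz_sub : z - b = -((1 / M) • (f' b - f' a)) := by rw [hz]; abel
    have h1 : ⟪f' b - f' a, z - b⟫ = -(1 / M) * ‖f' b - f' a‖ ^ 2 := by
      rw [hz_sub, inner_neg_right, real_inner_smul_right, real_inner_self_eq_norm_sq]
      ring
    have h2 : ‖z - b‖ ^ 2 = (1 / M) ^ 2 * ‖f' b - f' a‖ ^ 2 := by
      rw [hz_sub, norm_neg, norm_smul, mul_pow, Real.norm_eq_abs, sq_abs]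
    rw [h1, h2] at hdesc
    have hstep : φ a ≤ φ b - 1 / (2 * M) * ‖f' b - f' a‖ ^ 2 := by
      have he : φ b + -(1 / M) * ‖f' b - f' a‖ ^ 2 + M / 2 * ((1 / M) ^ 2 * ‖f' b - f' a‖ ^ 2)
          = φ b - 1 / (2 * M) * ‖f' b - f' a‖ ^ 2 := by
        field_simp
        ring
      rw [he] at hdesc
      exact hmin.trans hdesc
    have h2M : (0:ℝ) < 2 * M := by linarith
    have := mul_le_mul_of_nonneg_left hstep h2M.le
    have he2 : 2 * M * (φ b - 1 / (2 * M) * ‖f' b - f' a‖ ^ 2)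
        = 2 * M * φ b - ‖f' b - f' a‖ ^ 2 := by
      field_simp
    rw [he2] at this
    simp only [hφ] at this
    linarith
  have h1 := key x y
  have h2 := key y x
  have hn2 : ‖f' y - f' x‖ ^ 2 = ‖f' x - f' y‖ ^ 2 := by rw [norm_sub_rev]
  have e1 : ⟪f' x - f' y, x - y⟫
      = ⟪f' x, x⟫ - ⟪f' x, y⟫ - ⟪f' y, x⟫ + ⟪f' y, y⟫ := by
    rw [inner_sub_left, inner_sub_right, inner_sub_right]; ring
  rw [e1]
  rw [hn2] at h1
  nlinarith [h1, h2]

theorem stmt_19 (n : ℕ) (F : EuclideanSpace ℝ (Fin n) → ℝ)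
    (F' : EuclideanSpace ℝ (Fin n) → EuclideanSpace ℝ (Fin n))
    (L τ : ℝ) (hτ : 0 < τ) (hτL : τ ≤ L)
    (hgrad : ∀ x, HasGradientAt F (F' x) x)
    (hlip : ∀ x y, ‖F' x - F' y‖ ≤ L * ‖x - y‖)
    (hconv : StrongConvexOn Set.univ τ F)
    (g : EuclideanSpace ℝ (Fin n) → EuclideanSpace ℝ (Fin n))
    (hg : ∀ x, g x = x - (2 / (L + τ)) • F' x) :
    (∀ x y, ‖g x - g y‖ ≤ ((L - τ) / (L + τ)) * ‖x - y‖) ∧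
      (L - τ) / (L + τ) < 1 := by
  have hLτ : (0:ℝ) < L + τ := by linarith
  -- the shifted function h and its gradient
  set h := fun z => F z - τ / 2 * ‖z‖ ^ 2 with hh
  set h' := fun z => F' z - τ • z with hh'
  have hgrad_h : ∀ z, HasGradientAt h (h' z) z := by
    intro z
    rw [hasGradientAt_iff_hasFDerivAt]
    have h1 : HasFDerivAt (fun w : EuclideanSpace ℝ (Fin n) => ‖w‖ ^ 2) ((2:ℕ) • (innerSL ℝ z)) z := by
      simpa using (hasFDerivAt_id z).norm_sq
    have h2 := h1.const_mul (τ / 2)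
    have h3 := (hasGradientAt_iff_hasFDerivAt.mp (hgrad z)).sub h2
    refine h3.congr_fderiv ?_
    ext v
    simp only [hh', toDual_apply_apply, ContinuousLinearMap.coe_sub', Pi.sub_apply,
      ContinuousLinearMap.coe_smul', Pi.smul_apply, innerSL_apply_apply, smul_eq_mul,
      inner_sub_left, real_inner_smul_left]
    push_cast
    ring
  have hconv_h : ConvexOn ℝ univ h := strongConvexOn_iff_convex.mp hconv
  have hub : ∀ a b, ⟪h' a - h' b, a - b⟫ ≤ (L - τ) * ‖a - b‖ ^ 2 := by
    intro a b
    have he : h' a - h' b = (F' a - F' b) - τ • (a - b) := by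
      simp only [hh', smul_sub]; abel
    rw [he, inner_sub_left, real_inner_smul_left, real_inner_self_eq_norm_sq]
    have h1 := real_inner_le_norm (F' a - F' b) (a - b)
    have h2 := mul_le_mul_of_nonneg_right (hlip a b) (norm_nonneg (a - b))
    nlinarith
  -- the key inequality
  have key : ∀ x y, ‖F' x - F' y‖ ^ 2 + τ * L * ‖x - y‖ ^ 2
      ≤ (L + τ) * ⟪F' x - F' y, x - y⟫ := by
    intro x y
    have hmono : τ * ‖x - y‖ ^ 2 ≤ ⟪F' x - F' y, x - y⟫ := by
      have h1 := aux_first_order hconv_h hgrad_h x y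
      have h2 := aux_first_order hconv_h hgrad_h y x
      have e1 : ⟪h' x, y - x⟫ = -(⟪F' x, x - y⟫ - τ * ⟪x, x - y⟫) := by
        simp only [hh']
        rw [show y - x = -(x - y) by abel, inner_neg_right, inner_sub_left,
          real_inner_smul_left]
      have e2 : ⟪h' y, x - y⟫ = ⟪F' y, x - y⟫ - τ * ⟪y, x - y⟫ := by
        simp only [hh']
        rw [inner_sub_left, real_inner_smul_left]
      rw [e1] at h1
      rw [e2] at h2
      have e3 : ⟪F' x - F' y, x - y⟫ = ⟪F' x, x - y⟫ - ⟪F' y, x - y⟫ := by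
        rw [inner_sub_left]
      have e4 : ⟪x - y, x - y⟫ = ⟪x, x - y⟫ - ⟪y, x - y⟫ := by
        rw [inner_sub_left]
      have e5 : ⟪x - y, x - y⟫ = ‖x - y‖ ^ 2 := real_inner_self_eq_norm_sq _
      have e6 : τ * ⟪x - y, x - y⟫ = τ * ⟪x, x - y⟫ - τ * ⟪y, x - y⟫ := by rw [e4]; ring
      have e7 : τ * ⟪x - y, x - y⟫ = τ * ‖x - y‖ ^ 2 := by rw [e5]
      linarith
    rcases eq_or_lt_of_le hτL with hEq | hLt
    · -- τ = L
      subst hEq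
      have hl := hlip x y
      have hd2 : ‖F' x - F' y‖ ^ 2 ≤ τ ^ 2 * ‖x - y‖ ^ 2 := by
        nlinarith [norm_nonneg (F' x - F' y), norm_nonneg (x - y)]
      nlinarith
    · -- τ < L
      have hM : (0:ℝ) < L - τ := by linarith
      have hco := aux_coco hM hconv_h hgrad_h hub x y
      have he : h' x - h' y = (F' x - F' y) - τ • (x - y) := by
        simp only [hh', smul_sub]; abel
      rw [he] at hco
      have expand : ⟪F' x - F' y - τ • (x - y), x - y⟫
          = ⟪F' x - F' y, x - y⟫ - τ * ‖x - y‖ ^ 2 := by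
        rw [inner_sub_left, real_inner_smul_left, real_inner_self_eq_norm_sq]
      have expand2 : ‖F' x - F' y - τ • (x - y)‖ ^ 2
          = ‖F' x - F' y‖ ^ 2 - 2 * τ * ⟪F' x - F' y, x - y⟫ + τ ^ 2 * ‖x - y‖ ^ 2 := by
        rw [norm_sub_sq_real, real_inner_smul_right, norm_smul, Real.norm_eq_abs,
          mul_pow, sq_abs]
        ring
      rw [expand, expand2] at hco
      nlinarith [hco]
  constructor
  · intro x y
    have hgsub : g x - g y = (x - y) - (2 / (L + τ)) • (F' x - F' y) := by
      rw [hg x, hg y, smul_sub]; abel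
    set c : ℝ := 2 / (L + τ) with hc
    set κ : ℝ := (L - τ) / (L + τ) with hκ
    have hκnn : 0 ≤ κ := div_nonneg (by linarith) hLτ.le
    have hsq : ‖g x - g y‖ ^ 2 ≤ (κ * ‖x - y‖) ^ 2 := by
      rw [hgsub, norm_sub_sq_real, real_inner_smul_right, norm_smul, Real.norm_eq_abs,
        mul_pow, sq_abs, real_inner_comm]
      have hk := key x y
      have hne : L + τ ≠ 0 := hLτ.ne'
      rw [← mul_le_mul_iff_left₀ (show (0:ℝ) < (L + τ) ^ 2 by positivity)]
      have e1 : (‖x - y‖ ^ 2 - 2 * (c * ⟪F' x - F' y, x - y⟫) + c ^ 2 * ‖F' x - F' y‖ ^ 2)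
          * (L + τ) ^ 2
          = ‖x - y‖ ^ 2 * (L + τ) ^ 2 - 4 * (L + τ) * ⟪F' x - F' y, x - y⟫
            + 4 * ‖F' x - F' y‖ ^ 2 := by
        rw [hc]; field_simp; ring
      have e2 : (κ * ‖x - y‖) ^ 2 * (L + τ) ^ 2 = (L - τ) ^ 2 * ‖x - y‖ ^ 2 := by
        rw [hκ]; field_simp
      rw [e1, e2]
      nlinarith [hk]
    have := (pow_le_pow_iff_left₀ (norm_nonneg (g x - g y))
      (mul_nonneg hκnn (norm_nonneg (x - y))) (two_ne_zero)).mp hsq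
    exact this
  · rw [div_lt_one hLτ]; linarith
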